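/- Let q ∈ R^K with q_k > 0 for all k, c ∈ R^K, and ρ > 0, and consider f_2(x) = (1/2) xᵀ diag(q) x − cᵀ x + ρ ‖x‖_2. (i) If ‖c‖_2 ≤ ρ, then x* = 0 minimizes f_2 over R^K. (ii) If ‖c‖_2 > ρ and c_k ≠ 0 for all k, and λ* ≥ 0 minimizes the dual objective h(λ) = Σ_k c_k² / (q_k + λ q_k²) + ρ² λ over {λ ≥ 0}, then x* defined componentwise by x_k* = λ* c_k / (1 + λ* q_k) minimizes f_2 over R^K. -/

import Mathlib

set_option maxHeartbeats 800000

private theorem cs_sqrt {K : ℕ} (a b : Fin K → ℝ) :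
    ∑ k, a k * b k ≤ Real.sqrt (∑ k, a k ^ 2) * Real.sqrt (∑ k, b k ^ 2) := by
  have h := Finset.sum_mul_sq_le_sq_mul_sq Finset.univ a b
  calc ∑ k, a k * b k ≤ Real.sqrt ((∑ k, a k * b k) ^ 2) := by
        rw [Real.sqrt_sq_eq_abs]; exact le_abs_self _
    _ ≤ Real.sqrt ((∑ k, a k ^ 2) * ∑ k, b k ^ 2) := Real.sqrt_le_sqrt h
    _ = _ := Real.sqrt_mul (by positivity) _

/-- the minimizer of the `ℓ₂` regularized separable quadratic objective
`f₂(x) = (1/2) xᵀ diag(q) x − cᵀ x + ρ ‖x‖₂`: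
(i) if `‖c‖₂ ≤ ρ` then `x* = 0` minimizes `f₂`;
(ii) if `‖c‖₂ > ρ`, all `c_k ≠ 0`, and `λ* ≥ 0` minimizes the dual objective
`h(λ) = ∑ k, c k²/(q k + λ q k²) + ρ² λ` over `{λ ≥ 0}`, then `x*` defined by
`x*_k = λ* c_k / (1 + λ* q_k)` minimizes `f₂`. -/
theorem l2_quad_solution (K : ℕ) (q c : Fin K → ℝ)
    (hq : ∀ k, 0 < q k) (ρ : ℝ) (hρ : 0 < ρ) :
    ((Real.sqrt (∑ k, c k ^ 2) ≤ ρ) →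
      IsMinOn
        (fun x : Fin K → ℝ =>
          (1 / 2) * ∑ k, q k * x k ^ 2 - ∑ k, c k * x k + ρ * Real.sqrt (∑ k, x k ^ 2))
        (Set.univ : Set (Fin K → ℝ)) 0) ∧
    (ρ < Real.sqrt (∑ k, c k ^ 2) → (∀ k, c k ≠ 0) →
      ∀ lam : ℝ, 0 ≤ lam →
        IsMinOn (fun l : ℝ => ∑ k, c k ^ 2 / (q k + l * q k ^ 2) + ρ ^ 2 * l)
          {l : ℝ | 0 ≤ l} lam →
        IsMinOn
          (fun x : Fin K → ℝ =>
            (1 / 2) * ∑ k, q k * x k ^ 2 - ∑ k, c k * x k + ρ * Real.sqrt (∑ k, x k ^ 2))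
          (Set.univ : Set (Fin K → ℝ)) (fun k => lam * c k / (1 + lam * q k))) := by
  constructor
  · -- Part (i)
    intro hcρ
    rw [isMinOn_iff]
    intro x _
    simp only [Pi.zero_apply]
    have h0 : ∑ k : Fin K, q k * (0:ℝ) ^ 2 = 0 := by simp
    have h0' : ∑ k : Fin K, c k * (0:ℝ) = 0 := by simp
    have h0'' : ∑ k : Fin K, ((0:ℝ)) ^ 2 = 0 := by simp
    rw [h0, h0', h0'', Real.sqrt_zero]
    have hcs := cs_sqrt c x
    have hx0 : (0:ℝ) ≤ Real.sqrt (∑ k, x k ^ 2) := Real.sqrt_nonneg _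
    have hsum : (0:ℝ) ≤ ∑ k, q k * x k ^ 2 :=
      Finset.sum_nonneg fun k _ => by have := hq k; positivity
    nlinarith [mul_le_mul_of_nonneg_right hcρ hx0]
  · -- Part (ii)
    intro hρc hc lam hlam hmin
    set S := ∑ k, c k ^ 2 with hSdef
    have hS0 : 0 < S := by
      by_contra h
      push_neg at h
      rw [Real.sqrt_eq_zero'.mpr h] at hρc
      linarith
    have hρS : ρ ^ 2 < S := by
      have hs : Real.sqrt S ^ 2 = S := Real.sq_sqrt hS0.le
      nlinarith [Real.sqrt_nonneg S]
    have hne : (Finset.univ : Finset (Fin K)).Nonempty := by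
      by_contra h
      rw [Finset.not_nonempty_iff_eq_empty] at h
      rw [hSdef, h, Finset.sum_empty] at hS0
      exact lt_irrefl _ hS0
    obtain ⟨k₀, _⟩ := hne
    set T := ∑ k, c k ^ 2 * q k with hTdef
    have hT0 : 0 < T :=
      Finset.sum_pos' (fun k _ => by have := hq k; positivity)
        ⟨k₀, Finset.mem_univ _, by have := hq k₀; have := hc k₀; positivity⟩
    have hminle : ∀ μ : ℝ, 0 ≤ μ →
        (∑ k, c k ^ 2 / (q k + lam * q k ^ 2) + ρ ^ 2 * lam)
          ≤ ∑ k, c k ^ 2 / (q k + μ * q k ^ 2) + ρ ^ 2 * μ := fun μ hμ =>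
      isMinOn_iff.mp hmin μ hμ
    have hden : ∀ (μ : ℝ), 0 ≤ μ → ∀ k, (0:ℝ) < 1 + μ * q k := by
      intro μ hμ k
      have := hq k
      nlinarith
    -- key identity
    have key : ∀ μ : ℝ, 0 ≤ μ →
        (∑ k, c k ^ 2 / (q k + μ * q k ^ 2) + ρ ^ 2 * μ) -
          (∑ k, c k ^ 2 / (q k + lam * q k ^ 2) + ρ ^ 2 * lam)
        = (μ - lam) * (ρ ^ 2 - ∑ k, c k ^ 2 / ((1 + μ * q k) * (1 + lam * q k))) := by
      intro μ hμ
      have hterm : ∀ k : Fin K,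
          c k ^ 2 / (q k + μ * q k ^ 2) - c k ^ 2 / (q k + lam * q k ^ 2)
          = (lam - μ) * (c k ^ 2 / ((1 + μ * q k) * (1 + lam * q k))) := by
        intro k
        have h1 := hden μ hμ k
        have h2 := hden lam hlam k
        have hqk := hq k
        have e1 : q k + μ * q k ^ 2 = q k * (1 + μ * q k) := by ring
        have e2 : q k + lam * q k ^ 2 = q k * (1 + lam * q k) := by ring
        rw [e1, e2]
        field_simp
        ring
      have hsd : ∑ k, c k ^ 2 / (q k + μ * q k ^ 2) - ∑ k, c k ^ 2 / (q k + lam * q k ^ 2)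
          = (lam - μ) * ∑ k, c k ^ 2 / ((1 + μ * q k) * (1 + lam * q k)) := by
        rw [← Finset.sum_sub_distrib, Finset.mul_sum]
        exact Finset.sum_congr rfl fun k _ => hterm k
      have e3 : (∑ k, c k ^ 2 / (q k + μ * q k ^ 2) + ρ ^ 2 * μ) -
          (∑ k, c k ^ 2 / (q k + lam * q k ^ 2) + ρ ^ 2 * lam)
          = (∑ k, c k ^ 2 / (q k + μ * q k ^ 2) - ∑ k, c k ^ 2 / (q k + lam * q k ^ 2))
            + ρ ^ 2 * (μ - lam) := by ring
      rw [e3, hsd]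
      ring
    -- lam > 0
    have hlam0 : 0 < lam := by
      rcases hlam.lt_or_eq with h | h
      · exact h
      · exfalso
        subst h
        set μ := (S - ρ ^ 2) / (2 * T) with hμdef
        have hμpos : 0 < μ := by
          apply div_pos <;> linarith
        have hbound : S - μ * T
            ≤ ∑ k, c k ^ 2 / ((1 + μ * q k) * (1 + (0:ℝ) * q k)) := by
          have hstep : ∀ k : Fin K, c k ^ 2 - μ * (c k ^ 2 * q k)
              ≤ c k ^ 2 / ((1 + μ * q k) * (1 + (0:ℝ) * q k)) := by
            intro k
            have h1 := hden μ hμpos.le k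
            have hqk := hq k
            rw [le_div_iff₀ (by nlinarith)]
            nlinarith [sq_nonneg (c k), sq_nonneg (μ * q k), sq_nonneg (c k * (μ * q k))]
          calc S - μ * T = ∑ k, (c k ^ 2 - μ * (c k ^ 2 * q k)) := by
                rw [Finset.sum_sub_distrib, ← Finset.mul_sum]
            _ ≤ _ := Finset.sum_le_sum fun k _ => hstep k
        have hμT : μ * T = (S - ρ ^ 2) / 2 := by
          rw [hμdef]; field_simp
        have hk := key μ hμpos.le
        have hm := hminle μ hμpos.le
        nlinarith [hk, hm, hbound, hμT, hμpos]
    set G := ∑ k, c k ^ 2 / ((1 + lam * q k) * (1 + lam * q k)) with hGdef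
    -- perturbation bounds
    have hGup : ∀ μ : ℝ, lam ≤ μ →
        G - (μ - lam) * T ≤ ∑ k, c k ^ 2 / ((1 + μ * q k) * (1 + lam * q k)) := by
      intro μ hμl
      have hμ : 0 ≤ μ := le_trans hlam hμl
      have hterm : ∀ k : Fin K,
          c k ^ 2 / ((1 + lam * q k) * (1 + lam * q k)) - (μ - lam) * (c k ^ 2 * q k)
          ≤ c k ^ 2 / ((1 + μ * q k) * (1 + lam * q k)) := by
        intro k
        have h1 := hden μ hμ k
        have h2 := hden lam hlam k
        have hqk := hq k
        have hμq : 0 ≤ μ * q k := by positivity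
        have hlq : 0 ≤ lam * q k := by positivity
        have hD : (1:ℝ) ≤ (1 + μ * q k) * ((1 + lam * q k) * (1 + lam * q k)) := by nlinarith
        have heq : c k ^ 2 / ((1 + lam * q k) * (1 + lam * q k))
            - c k ^ 2 / ((1 + μ * q k) * (1 + lam * q k))
            = (μ - lam) * (c k ^ 2 * q k)
              / ((1 + μ * q k) * ((1 + lam * q k) * (1 + lam * q k))) := by
          field_simp
          ring
        have hle : (μ - lam) * (c k ^ 2 * q k)
              / ((1 + μ * q k) * ((1 + lam * q k) * (1 + lam * q k)))
            ≤ (μ - lam) * (c k ^ 2 * q k) :=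
          div_le_self (mul_nonneg (by linarith) (by positivity)) hD
        linarith
      calc G - (μ - lam) * T
          = ∑ k, (c k ^ 2 / ((1 + lam * q k) * (1 + lam * q k)) - (μ - lam) * (c k ^ 2 * q k)) := by
            rw [hGdef, hTdef, Finset.sum_sub_distrib, ← Finset.mul_sum]
        _ ≤ _ := Finset.sum_le_sum fun k _ => hterm k
    have hGdown : ∀ μ : ℝ, 0 ≤ μ → μ ≤ lam →
        ∑ k, c k ^ 2 / ((1 + μ * q k) * (1 + lam * q k)) ≤ G + (lam - μ) * T := by
      intro μ hμ hμl
      have hterm : ∀ k : Fin K,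
          c k ^ 2 / ((1 + μ * q k) * (1 + lam * q k))
          ≤ c k ^ 2 / ((1 + lam * q k) * (1 + lam * q k)) + (lam - μ) * (c k ^ 2 * q k) := by
        intro k
        have h1 := hden μ hμ k
        have h2 := hden lam hlam k
        have hqk := hq k
        have hμq : 0 ≤ μ * q k := by positivity
        have hlq : 0 ≤ lam * q k := by positivity
        have hD : (1:ℝ) ≤ (1 + μ * q k) * ((1 + lam * q k) * (1 + lam * q k)) := by nlinarith
        have heq : c k ^ 2 / ((1 + μ * q k) * (1 + lam * q k))
            - c k ^ 2 / ((1 + lam * q k) * (1 + lam * q k))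
            = (lam - μ) * (c k ^ 2 * q k)
              / ((1 + μ * q k) * ((1 + lam * q k) * (1 + lam * q k))) := by
          field_simp
          ring
        have hle : (lam - μ) * (c k ^ 2 * q k)
              / ((1 + μ * q k) * ((1 + lam * q k) * (1 + lam * q k)))
            ≤ (lam - μ) * (c k ^ 2 * q k) :=
          div_le_self (mul_nonneg (by linarith) (by positivity)) hD
        linarith
      calc ∑ k, c k ^ 2 / ((1 + μ * q k) * (1 + lam * q k))
          ≤ ∑ k, (c k ^ 2 / ((1 + lam * q k) * (1 + lam * q k)) + (lam - μ) * (c k ^ 2 * q k)) :=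
            Finset.sum_le_sum fun k _ => hterm k
        _ = G + (lam - μ) * T := by
            rw [hGdef, hTdef, Finset.sum_add_distrib, ← Finset.mul_sum]
    -- stationarity
    have hstat : G = ρ ^ 2 := by
      by_contra hneq
      rcases lt_or_gt_of_ne hneq with hlt | hgt
      · -- G < ρ²: move left
        set δ := min (lam / 2) ((ρ ^ 2 - G) / (2 * T)) with hδdef
        have hδ0 : 0 < δ :=
          lt_min (by linarith) (div_pos (by linarith) (by linarith))
        have hδlam : δ ≤ lam / 2 := min_le_left _ _
        have hδT : δ * T ≤ (ρ ^ 2 - G) / 2 := by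
          have h := min_le_right (lam / 2) ((ρ ^ 2 - G) / (2 * T))
          calc δ * T ≤ (ρ ^ 2 - G) / (2 * T) * T :=
                mul_le_mul_of_nonneg_right h hT0.le
            _ = (ρ ^ 2 - G) / 2 := by field_simp
        set μ := lam - δ with hμdef
        have hμ0 : 0 ≤ μ := by rw [hμdef]; linarith
        have hk := key μ hμ0
        have hm := hminle μ hμ0
        have hdn := hGdown μ hμ0 (by rw [hμdef]; linarith)
        have hml : μ - lam = -δ := by rw [hμdef]; ring
        have hml' : lam - μ = δ := by rw [hμdef]; ring
        rw [hml] at hk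
        rw [hml'] at hdn
        nlinarith [hk, hm, hdn, hδ0, hδT]
      · -- G > ρ²: move right
        set δ := (G - ρ ^ 2) / (2 * T) with hδdef
        have hδ0 : 0 < δ := div_pos (by linarith) (by linarith)
        have hδT : δ * T = (G - ρ ^ 2) / 2 := by
          rw [hδdef]; field_simp
        set μ := lam + δ with hμdef
        have hμ0 : 0 ≤ μ := by rw [hμdef]; linarith
        have hk := key μ hμ0
        have hm := hminle μ hμ0
        have hup := hGup μ (by rw [hμdef]; linarith)
        have hml : μ - lam = δ := by rw [hμdef]; ring
        rw [hml] at hk hup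
        nlinarith [hk, hm, hup, hδ0, hδT]
    -- final: the primal point is a minimizer
    rw [isMinOn_iff]
    intro x _
    dsimp only
    set xs : Fin K → ℝ := fun k => lam * c k / (1 + lam * q k) with hxs
    have hxsk : ∀ k, xs k = lam * c k / (1 + lam * q k) := fun k => by rw [hxs]
    have hXs : ∑ k, xs k ^ 2 = (lam * ρ) ^ 2 := by
      have hterm : ∀ k : Fin K,
          xs k ^ 2 = lam ^ 2 * (c k ^ 2 / ((1 + lam * q k) * (1 + lam * q k))) := by
        intro k
        have h2 := hden lam hlam k
        rw [hxsk k]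
        field_simp
      rw [Finset.sum_congr rfl fun k _ => hterm k, ← Finset.mul_sum, ← hGdef, hstat]
      ring
    have hNs : Real.sqrt (∑ k, xs k ^ 2) = lam * ρ := by
      rw [hXs, Real.sqrt_sq (by positivity)]
    have hgrad : ∀ k, lam * (q k * xs k - c k) = -xs k := by
      intro k
      have h2 := (hden lam hlam k).ne'
      rw [hxsk k]
      field_simp
      ring
    have hconv : ∀ k ∈ Finset.univ, (q k * xs k - c k) * (x k - xs k) ≤
        (1 / 2) * (q k * x k ^ 2) - c k * x k
          - ((1 / 2) * (q k * xs k ^ 2) - c k * xs k) := by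
      intro k _
      nlinarith [mul_nonneg (hq k).le (sq_nonneg (x k - xs k))]
    have hsum1 : ∑ k, (q k * xs k - c k) * (x k - xs k) ≤
        (1 / 2) * ∑ k, q k * x k ^ 2 - ∑ k, c k * x k
          - ((1 / 2) * ∑ k, q k * xs k ^ 2 - ∑ k, c k * xs k) := by
      have h := Finset.sum_le_sum hconv
      have e : ∑ k, ((1 / 2) * (q k * x k ^ 2) - c k * x k
            - ((1 / 2) * (q k * xs k ^ 2) - c k * xs k))
          = (1 / 2) * ∑ k, q k * x k ^ 2 - ∑ k, c k * x k
            - ((1 / 2) * ∑ k, q k * xs k ^ 2 - ∑ k, c k * xs k) := by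
        simp only [Finset.sum_sub_distrib, Finset.mul_sum]
      linarith [e ▸ h]
    have hsum2 : lam * ∑ k, (q k * xs k - c k) * (x k - xs k)
        = (lam * ρ) ^ 2 - ∑ k, xs k * x k := by
      have hterm : ∀ k : Fin K, lam * ((q k * xs k - c k) * (x k - xs k))
          = xs k ^ 2 - xs k * x k := by
        intro k
        calc lam * ((q k * xs k - c k) * (x k - xs k))
            = (lam * (q k * xs k - c k)) * (x k - xs k) := by ring
          _ = (-xs k) * (x k - xs k) := by rw [hgrad k]
          _ = xs k ^ 2 - xs k * x k := by ring
      rw [Finset.mul_sum, Finset.sum_congr rfl fun k _ => hterm k,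
        Finset.sum_sub_distrib, hXs]
    have hcs := cs_sqrt xs x
    rw [hNs] at hcs
    have hX0 : (0:ℝ) ≤ Real.sqrt (∑ k, x k ^ 2) := Real.sqrt_nonneg _
    rw [hNs]
    have h1' := mul_le_mul_of_nonneg_left hsum1 hlam0.le
    rw [hsum2] at h1'
    nlinarith [h1', hcs, hlam0, hX0]
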